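/- Suppose 2 < s < n. Let x₀ ∈ ℝⁿ, C₀ > 0, and let u : ℝⁿ → [0,∞] be a Borel measurable function satisfying u(x) ≥ C₀·𝒩u(x) + C₀·|x−x₀|^{(αs−n)/(s−1)} for all x ∈ ℝⁿ. Then for any q > 1 there exist constants C(q) > 0 depending on q, n, α, s, C₀ and C > 0 depending on n, α, s, C₀ such that for all x ∈ ℝⁿ, u(x) ≥ C(q) · Σ_{j=1}^∞ j^{q(2−s)/(s−1)} · C^j · 𝒩^j(f)(x) + C·|x−x₀|^{(αs−n)/(s−1)}, where f(y) = |y−x₀|^{(αs−n)/(s−1)}. -/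
import Mathlib


open MeasureTheory Metric Set Filter
open scoped ENNReal NNReal Topology

noncomputable section

/-- `n`-dimensional Euclidean space. -/
abbrev En (n : ℕ) : Type := EuclideanSpace ℝ (Fin n)

/-- The truncated Wolff potential
`W^ρ_{α,s} μ (x) = ∫_0^ρ (μ(B(x,r))/r^{n-αs})^{1/(s-1)} dr/r`. -/
noncomputable def wolffT (n : ℕ) (α s : ℝ) (μ : Measure (En n)) (ρ : ℝ) (x : En n) : ℝ≥0∞ :=
  ∫⁻ r in Set.Ioo (0:ℝ) ρ,
    (μ (Metric.ball x r) / ENNReal.ofReal (r ^ ((n:ℝ) - α * s))) ^ (1/(s-1))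
      * ENNReal.ofReal r⁻¹

/-- The (full) Wolff potential
`W_{α,s} μ (x) = ∫_0^∞ (μ(B(x,r))/r^{n-αs})^{1/(s-1)} dr/r`. -/
noncomputable def wolff (n : ℕ) (α s : ℝ) (μ : Measure (En n)) (x : En n) : ℝ≥0∞ :=
  ∫⁻ r in Set.Ioi (0:ℝ),
    (μ (Metric.ball x r) / ENNReal.ofReal (r ^ ((n:ℝ) - α * s))) ^ (1/(s-1))
      * ENNReal.ofReal r⁻¹

/-- The truncated Riesz-type potential
`I^ρ μ (x) = ∫_0^ρ (μ(B(x,r))/r^{n-αs}) dr/r`. -/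
noncomputable def rieszT (n : ℕ) (α s : ℝ) (μ : Measure (En n)) (ρ : ℝ) (x : En n) : ℝ≥0∞ :=
  ∫⁻ r in Set.Ioo (0:ℝ) ρ,
    (μ (Metric.ball x r) / ENNReal.ofReal (r ^ ((n:ℝ) - α * s))) * ENNReal.ofReal r⁻¹

/-- The nonlinear operator `𝒩 f (x) = W_{α,s}(f^{s-1} dσ)(x)`. -/
noncomputable def Nop (n : ℕ) (α s : ℝ) (σ : Measure (En n)) (f : En n → ℝ≥0∞) (x : En n) :
    ℝ≥0∞ :=
  ∫⁻ r in Set.Ioi (0:ℝ),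
    (ENNReal.ofReal (r ^ (α * s - (n:ℝ))) * ∫⁻ y in Metric.ball x r, (f y) ^ (s-1) ∂σ)
        ^ (1/(s-1))
      * ENNReal.ofReal r⁻¹

/-- The Riesz potential `I_α f (x) = (n-α)⁻¹ ∫ f(y) |x-y|^{α-n} dy`. -/
noncomputable def rieszPot (n : ℕ) (α : ℝ) (f : En n → ℝ≥0∞) (x : En n) : ℝ≥0∞ :=
  ENNReal.ofReal (((n:ℝ) - α)⁻¹) * ∫⁻ y, f y * ENNReal.ofReal (‖x - y‖ ^ (α - (n:ℝ)))

/-- The Riesz capacity `cap_{α,s}(A) = inf { ∫ f^s : f ≥ 0, I_α f ≥ 1 on A }`. -/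
noncomputable def rieszCap (n : ℕ) (α s : ℝ) (A : Set (En n)) : ℝ≥0∞ :=
  ⨅ (f : En n → ℝ≥0∞) (_ : Measurable f) (_ : ∀ x ∈ A, 1 ≤ rieszPot n α f x),
    ∫⁻ y, (f y) ^ s

/-- Extended exponential: `eexp x = exp x` for finite `x`, with `eexp ∞ = ∞`. -/
noncomputable def eexp (x : ℝ≥0∞) : ℝ≥0∞ :=
  if x = ∞ then ∞ else ENNReal.ofReal (Real.exp x.toReal)

lemma Nop_mono {n : ℕ} {α s : ℝ} (σ : Measure (En n)) (hs1 : (0:ℝ) ≤ s - 1)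
    {f g : En n → ℝ≥0∞} (h : ∀ y, f y ≤ g y) (x : En n) :
    Nop n α s σ f x ≤ Nop n α s σ g x := by
  refine lintegral_mono fun r => ?_
  refine mul_le_mul_left ?_ _
  refine ENNReal.rpow_le_rpow ?_ (div_nonneg zero_le_one hs1)
  refine mul_le_mul_right ?_ _
  exact lintegral_mono fun y => ENNReal.rpow_le_rpow (h y) hs1

lemma Nop_const_mul {n : ℕ} {α s : ℝ} (σ : Measure (En n)) (hs1 : (1:ℝ) < s)
    (a : ℝ≥0∞) (ha : a ≠ ∞) (g : En n → ℝ≥0∞) (x : En n) :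
    Nop n α s σ (fun y => a * g y) x = a * Nop n α s σ g x := by
  have hs0 : (0:ℝ) ≤ s - 1 := by linarith
  have hane : a ^ (s-1) ≠ ∞ := ENNReal.rpow_ne_top_of_nonneg hs0 ha
  unfold Nop
  rw [← lintegral_const_mul' a _ ha]
  refine lintegral_congr fun r => ?_
  have h1 : ∀ y : En n, (a * g y) ^ (s-1) = a ^ (s-1) * (g y) ^ (s-1) := fun y =>
    ENNReal.mul_rpow_of_nonneg _ _ hs0
  simp_rw [h1]
  rw [lintegral_const_mul' _ _ hane]
  rw [show ENNReal.ofReal (r ^ (α * s - (n:ℝ))) *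
        (a ^ (s-1) * ∫⁻ y in Metric.ball x r, (g y) ^ (s-1) ∂σ)
      = a ^ (s-1) * (ENNReal.ofReal (r ^ (α * s - (n:ℝ))) *
        ∫⁻ y in Metric.ball x r, (g y) ^ (s-1) ∂σ) by ring]
  rw [ENNReal.mul_rpow_of_nonneg _ _ (div_nonneg zero_le_one hs0)]
  rw [← ENNReal.rpow_mul, mul_one_div, div_self (by linarith : s - 1 ≠ 0), ENNReal.rpow_one,
    mul_assoc]

/-- Key iteration lemma: `C₀^(j+2) 𝒩^(j+1) f ≤ u`. -/
lemma key_iter {n : ℕ} {α s C₀ : ℝ} (hs1 : (1:ℝ) < s) (hC₀ : 0 < C₀)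
    (σ : Measure (En n)) (u f : En n → ℝ≥0∞)
    (hu1 : ∀ x, ENNReal.ofReal C₀ * Nop n α s σ u x ≤ u x)
    (hu2 : ∀ x, ENNReal.ofReal C₀ * f x ≤ u x) :
    ∀ j x, (ENNReal.ofReal C₀) ^ (j+2) * (Nop n α s σ)^[j+1] f x ≤ u x := by
  set c : ℝ≥0∞ := ENNReal.ofReal C₀ with hc
  have hcne : c ≠ ∞ := ENNReal.ofReal_ne_top
  have hs0 : (0:ℝ) ≤ s - 1 := by linarith
  intro j
  induction j with
  | zero =>
    intro x
    have h1 : Nop n α s σ (fun y => c * f y) x ≤ Nop n α s σ u x :=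
      Nop_mono σ hs0 hu2 x
    rw [Nop_const_mul σ hs1 c hcne] at h1
    calc c ^ (0+2) * (Nop n α s σ)^[0+1] f x
        = c * (c * Nop n α s σ f x) := by
          simp [Function.iterate_one, pow_succ, pow_one]; ring
      _ ≤ c * Nop n α s σ u x := mul_le_mul_right h1 c
      _ ≤ u x := hu1 x
  | succ j ih =>
    intro x
    have h1 : Nop n α s σ (fun y => c ^ (j+2) * (Nop n α s σ)^[j+1] f y) x
        ≤ Nop n α s σ u x := Nop_mono σ hs0 ih x
    rw [Nop_const_mul σ hs1 _ (by simp [hcne]) _ x] at h1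
    have h2 : Nop n α s σ ((Nop n α s σ)^[j+1] f) x = (Nop n α s σ)^[j+1+1] f x :=
      congrFun (Function.iterate_succ_apply' (Nop n α s σ) (j+1) f).symm x
    rw [h2] at h1
    calc c ^ (j+1+2) * (Nop n α s σ)^[j+1+1] f x
        = c * (c ^ (j+2) * (Nop n α s σ)^[j+1+1] f x) := by ring
      _ ≤ c * Nop n α s σ u x := mul_le_mul_right h1 c
      _ ≤ u x := hu1 x

/-- Lemma `lowbdsum`, case `2 < s < n`: if
`u ≥ C₀ 𝒩 u + C₀ |x-x₀|^{(αs-n)/(s-1)}` pointwise, then there is `C = C(n,α,s,C₀) > 0` such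
that for every `q > 1` there is `C(q) > 0` with
`u ≥ C(q) Σ_{j=1}^∞ j^{q(2-s)/(s-1)} C^j 𝒩^j(f) + C |x-x₀|^{(αs-n)/(s-1)}`,
where `f(y) = |y-x₀|^{(αs-n)/(s-1)}`. -/
theorem statement7 (n : ℕ) (hn : 2 ≤ n) (α s C₀ : ℝ) (hs : 2 < s) (hsn : s < n) (hα : 0 < α)
    (hαs : α * s < n) (hC₀ : 0 < C₀) :
    ∃ C : ℝ, 0 < C ∧
      ∀ q : ℝ, 1 < q →
        ∃ Cq : ℝ, 0 < Cq ∧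
          ∀ σ : Measure (En n), IsLocallyFiniteMeasure σ →
            ∀ (x₀ : En n) (u : En n → ℝ≥0∞), Measurable u →
              (∀ x : En n,
                ENNReal.ofReal C₀ * Nop n α s σ u x
                  + ENNReal.ofReal C₀ * (ENNReal.ofReal ‖x - x₀‖) ^ ((α*s-(n:ℝ))/(s-1))
                  ≤ u x) →
              ∀ x : En n,
                ENNReal.ofReal Cq *
                    (∑' j : ℕ, ((j:ℝ≥0∞) + 1) ^ (q*(2-s)/(s-1)) * ENNReal.ofReal C ^ (j+1)
                      * ((Nop n α s σ)^[j+1]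
                          (fun y => (ENNReal.ofReal ‖y - x₀‖) ^ ((α*s-(n:ℝ))/(s-1))) x))
                  + ENNReal.ofReal C * (ENNReal.ofReal ‖x - x₀‖) ^ ((α*s-(n:ℝ))/(s-1))
                  ≤ u x := by
  have hs1 : (1:ℝ) < s := by linarith
  refine ⟨C₀ / 2, by positivity, fun q hq => ⟨C₀ / 2, by positivity, ?_⟩⟩
  intro σ hσ x₀ u hu hineq x
  set c : ℝ≥0∞ := ENNReal.ofReal C₀ with hc
  set f : En n → ℝ≥0∞ := fun y => (ENNReal.ofReal ‖y - x₀‖) ^ ((α*s-(n:ℝ))/(s-1)) with hf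
  have hu1 : ∀ z, c * Nop n α s σ u z ≤ u z := fun z =>
    le_trans (self_le_add_right _ _) (hineq z)
  have hu2 : ∀ z, c * f z ≤ u z := fun z =>
    le_trans (self_le_add_left _ _) (hineq z)
  have hkey := key_iter hs1 hC₀ σ u f hu1 hu2
  -- basic constants
  have hc2 : ENNReal.ofReal (C₀ / 2) = 2⁻¹ * c := by
    rw [hc, ENNReal.ofReal_div_of_pos (by norm_num), div_eq_mul_inv, mul_comm]
    norm_num
  have hcinv : ENNReal.ofReal C₀⁻¹ * c = 1 := by
    rw [hc, ← ENNReal.ofReal_mul (by positivity), inv_mul_cancel₀ hC₀.ne', ENNReal.ofReal_one]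
  -- bound each term of the sum
  have hterm : ∀ j : ℕ,
      ((j:ℝ≥0∞) + 1) ^ (q*(2-s)/(s-1)) * ENNReal.ofReal (C₀/2) ^ (j+1)
        * ((Nop n α s σ)^[j+1] f x)
      ≤ (2:ℝ≥0∞)⁻¹ ^ (j+1) * (ENNReal.ofReal C₀⁻¹ * u x) := by
    intro j
    have he : q*(2-s)/(s-1) < 0 :=
      div_neg_of_neg_of_pos (mul_neg_of_pos_of_neg (by linarith) (by linarith)) (by linarith)
    have hw : ((j:ℝ≥0∞) + 1) ^ (q*(2-s)/(s-1)) ≤ 1 :=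
      ENNReal.rpow_le_one_of_one_le_of_neg (le_add_self) he
    have hNle : c ^ (j+1) * (Nop n α s σ)^[j+1] f x ≤ ENNReal.ofReal C₀⁻¹ * u x := by
      have := hkey j x
      calc c ^ (j+1) * (Nop n α s σ)^[j+1] f x
          = ENNReal.ofReal C₀⁻¹ * (c ^ (j+2) * (Nop n α s σ)^[j+1] f x) := by
            rw [show c ^ (j+2) = c * c ^ (j+1) by ring, ← mul_assoc, ← mul_assoc, hcinv,
              one_mul]
        _ ≤ ENNReal.ofReal C₀⁻¹ * u x := mul_le_mul_right this _
    calc ((j:ℝ≥0∞) + 1) ^ (q*(2-s)/(s-1)) * ENNReal.ofReal (C₀/2) ^ (j+1)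
          * ((Nop n α s σ)^[j+1] f x)
        ≤ 1 * ENNReal.ofReal (C₀/2) ^ (j+1) * ((Nop n α s σ)^[j+1] f x) := by
          gcongr
      _ = (2:ℝ≥0∞)⁻¹ ^ (j+1) * (c ^ (j+1) * (Nop n α s σ)^[j+1] f x) := by
          rw [one_mul, hc2, mul_pow, mul_assoc]
      _ ≤ (2:ℝ≥0∞)⁻¹ ^ (j+1) * (ENNReal.ofReal C₀⁻¹ * u x) := mul_le_mul_right hNle _
  -- sum the geometric series
  have hsum : (∑' j : ℕ, ((j:ℝ≥0∞) + 1) ^ (q*(2-s)/(s-1)) * ENNReal.ofReal (C₀/2) ^ (j+1)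
      * ((Nop n α s σ)^[j+1] f x)) ≤ ENNReal.ofReal C₀⁻¹ * u x := by
    calc (∑' j : ℕ, ((j:ℝ≥0∞) + 1) ^ (q*(2-s)/(s-1)) * ENNReal.ofReal (C₀/2) ^ (j+1)
          * ((Nop n α s σ)^[j+1] f x))
        ≤ ∑' j : ℕ, (2:ℝ≥0∞)⁻¹ ^ (j+1) * (ENNReal.ofReal C₀⁻¹ * u x) :=
          ENNReal.tsum_le_tsum hterm
      _ = (∑' j : ℕ, (2:ℝ≥0∞)⁻¹ ^ (j+1)) * (ENNReal.ofReal C₀⁻¹ * u x) :=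
          ENNReal.tsum_mul_right
      _ = 1 * (ENNReal.ofReal C₀⁻¹ * u x) := by
          congr 1
          have : ∀ j : ℕ, (2:ℝ≥0∞)⁻¹ ^ (j+1) = 2⁻¹ * 2⁻¹ ^ j := fun j => by ring
          simp_rw [this]
          rw [ENNReal.tsum_mul_left, ENNReal.tsum_geometric, ENNReal.one_sub_inv_two, inv_inv,
            ENNReal.inv_mul_cancel (by norm_num) (by norm_num)]
      _ = ENNReal.ofReal C₀⁻¹ * u x := one_mul _
  -- combine
  have h1 : ENNReal.ofReal (C₀/2) *
      (∑' j : ℕ, ((j:ℝ≥0∞) + 1) ^ (q*(2-s)/(s-1)) * ENNReal.ofReal (C₀/2) ^ (j+1)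
        * ((Nop n α s σ)^[j+1] f x)) ≤ 2⁻¹ * u x := by
    calc ENNReal.ofReal (C₀/2) * _ ≤ ENNReal.ofReal (C₀/2) * (ENNReal.ofReal C₀⁻¹ * u x) :=
          mul_le_mul_right hsum _
      _ = 2⁻¹ * (ENNReal.ofReal C₀⁻¹ * c) * u x := by rw [hc2]; ring
      _ = 2⁻¹ * u x := by rw [hcinv, mul_one]
  have h2 : ENNReal.ofReal (C₀/2) * f x ≤ 2⁻¹ * u x := by
    calc ENNReal.ofReal (C₀/2) * f x = 2⁻¹ * (c * f x) := by rw [hc2, mul_assoc]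
      _ ≤ 2⁻¹ * u x := mul_le_mul_right (hu2 x) _
  calc ENNReal.ofReal (C₀/2) *
        (∑' j : ℕ, ((j:ℝ≥0∞) + 1) ^ (q*(2-s)/(s-1)) * ENNReal.ofReal (C₀/2) ^ (j+1)
          * ((Nop n α s σ)^[j+1] f x))
        + ENNReal.ofReal (C₀/2) * f x
      ≤ 2⁻¹ * u x + 2⁻¹ * u x := add_le_add h1 h2
    _ = (2⁻¹ + 2⁻¹) * u x := by rw [add_mul]
    _ = u x := by rw [ENNReal.inv_two_add_inv_two, one_mul]
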